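/- For every real α with 0 < α ≤ 1 and every real η > 0, one has E_{α,1}(-η) > 0. -/

import Mathlib

/-- The Mittag-Leffler function `E_{α,β}(x) = ∑_{k=0}^∞ x^k / Γ(αk + β)` for real `x`,
where `1/Γ` is interpreted as its entire extension (Mathlib's `Real.Gamma` vanishes at the
poles, so division yields `0` there). The series converges absolutely for every `x`. -/
noncomputable def mittagLeffler (α β x : ℝ) : ℝ :=
  ∑' k : ℕ, x ^ k / Real.Gamma (α * k + β)

open Finset Filter Topology

namespace MLaux

/-- `B x n = binom(x+n, n)` as a product. -/
noncomputable def B (x : ℝ) (n : ℕ) : ℝ := ∏ i ∈ Finset.range n, (x + i + 1) / (i + 1)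

/-- Coefficients of `(1-z)^α`. -/
noncomputable def g (α : ℝ) : ℕ → ℝ
  | 0 => 1
  | (j+1) => g α j * ((j : ℝ) - α) / (j + 1)

lemma B_zero (x : ℝ) : B x 0 = 1 := by simp [B]

lemma B_succ (x : ℝ) (n : ℕ) : B x (n+1) = B x n * ((x + n + 1) / (n + 1)) := by
  simp only [B, Finset.prod_range_succ, Finset.prod_div_distrib]
  rw [div_mul_div_comm]

lemma B_pos {x : ℝ} (hx : -1 < x) (n : ℕ) : 0 < B x n := by
  refine Finset.prod_pos fun i _ => div_pos (by linarith [Nat.cast_nonneg (α := ℝ) i]) (by positivity)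

lemma B_mono {x y : ℝ} (hx : -1 < x) (hxy : x ≤ y) (n : ℕ) : B x n ≤ B y n := by
  unfold B
  refine Finset.prod_le_prod (fun i _ => le_of_lt (div_pos (by linarith [Nat.cast_nonneg (α := ℝ) i]) (by positivity))) ?_
  intro i _
  have hi : (0:ℝ) < (i:ℝ)+1 := by positivity
  gcongr

lemma B_le {x : ℝ} (hx : 0 ≤ x) (n : ℕ) : B x n ≤ (1 + x)^n := by
  have h : ((1:ℝ) + x)^n = ∏ _i ∈ Finset.range n, (1+x) := by
    rw [Finset.prod_const, Finset.card_range]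
  rw [B, h]
  refine Finset.prod_le_prod (fun i _ => le_of_lt (div_pos (by positivity) (by positivity))) ?_
  intro i _
  rw [div_le_iff₀ (by positivity : (0:ℝ) < (i:ℝ)+1)]
  nlinarith [Nat.cast_nonneg (α := ℝ) i]




lemma g_zero (α : ℝ) : g α 0 = 1 := rfl
lemma g_succ (α : ℝ) (j : ℕ) : g α (j+1) = g α j * ((j : ℝ) - α) / (j + 1) := rfl

lemma g_mul (α : ℝ) (j : ℕ) : ((j:ℝ) + 1) * g α (j+1) = ((j:ℝ) - α) * g α j := by
  rw [g_succ]
  field_simp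

lemma conv_rec (α x : ℝ) (n : ℕ) :
    ((n:ℝ)+1) * ∑ j ∈ Finset.range (n+2), g α j * B x (n+1-j)
      = ((n:ℝ) + x + 1 - α) * ∑ j ∈ Finset.range (n+1), g α j * B x (n-j) := by
  have split : ∀ j ∈ Finset.range (n+2),
      ((n:ℝ)+1) * (g α j * B x (n+1-j))
        = (j:ℝ) * g α j * B x (n+1-j) + ((n+1-j : ℕ):ℝ) * (g α j * B x (n+1-j)) := by
    intro j hj
    have hj' : j ≤ n+1 := Nat.lt_succ_iff.mp (Finset.mem_range.mp hj)
    have : ((n+1-j : ℕ):ℝ) = ((n:ℝ)+1) - (j:ℝ) := by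
      rw [Nat.cast_sub hj']; push_cast; ring
    rw [this]; ring
  rw [Finset.mul_sum, Finset.sum_congr rfl split, Finset.sum_add_distrib]
  have S1 : ∑ j ∈ Finset.range (n+2), (j:ℝ) * g α j * B x (n+1-j)
      = ∑ i ∈ Finset.range (n+1), ((i:ℝ) - α) * (g α i * B x (n-i)) := by
    rw [Finset.sum_range_succ']
    simp only [Nat.cast_zero, zero_mul, add_zero, Nat.succ_sub_succ]
    refine Finset.sum_congr rfl fun i _ => ?_
    push_cast
    rw [show ((i:ℝ)+1) * g α (i+1) * B x (n-i) = (((i:ℝ)+1) * g α (i+1)) * B x (n-i) by ring,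
      g_mul]
    ring
  have S2 : ∑ j ∈ Finset.range (n+2), ((n+1-j : ℕ):ℝ) * (g α j * B x (n+1-j))
      = ∑ j ∈ Finset.range (n+1), (x + ((n-j : ℕ):ℝ) + 1) * (g α j * B x (n-j)) := by
    rw [Finset.sum_range_succ]
    simp only [Nat.sub_self, Nat.cast_zero, zero_mul, add_zero]
    refine Finset.sum_congr rfl fun j hj => ?_
    have hj' : j ≤ n := Nat.lt_succ_iff.mp (Finset.mem_range.mp hj)
    have h1 : n + 1 - j = (n - j) + 1 := by omega
    rw [h1, B_succ]
    generalize n - j = m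
    have h2 : ((m:ℕ):ℝ) + 1 ≠ 0 := by positivity
    push_cast [-Nat.cast_sub]
    field_simp
  rw [S1, S2, ← Finset.sum_add_distrib, Finset.mul_sum]
  refine Finset.sum_congr rfl fun i hi => ?_
  have hi' : i ≤ n := Nat.lt_succ_iff.mp (Finset.mem_range.mp hi)
  have : ((n-i : ℕ):ℝ) = (n:ℝ) - (i:ℝ) := Nat.cast_sub hi'
  rw [this]
  ring

lemma key (α x : ℝ) (n : ℕ) :
    ∑ j ∈ Finset.range (n+1), g α j * B x (n-j) = B (x-α) n := by
  induction n with
  | zero => simp [g_zero, B]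
  | succ n ih =>
    have h := conv_rec α x n
    rw [ih] at h
    have hn : ((n:ℝ)+1) ≠ 0 := by positivity
    have h2 : ((n:ℝ)+1) * B (x-α) (n+1) = ((n:ℝ) + x + 1 - α) * B (x-α) n := by
      rw [B_succ]
      field_simp
      ring
    exact mul_left_cancel₀ hn (h.trans h2.symm)


noncomputable def s (α : ℝ) (n : ℕ) : ℝ := B (-α) n

lemma s_zero (α : ℝ) : s α 0 = 1 := by simp [s, B]

lemma s_succ (α : ℝ) (n : ℕ) : s α (n+1) = s α n * (((n:ℝ) + 1 - α)/((n:ℝ)+1)) := by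
  show B (-α) (n+1) = B (-α) n * _
  rw [B_succ]
  ring_nf

lemma s_pos {α : ℝ} (hα : α < 1) (n : ℕ) : 0 < s α n := B_pos (by linarith) n

lemma s_le_one {α : ℝ} (hα0 : 0 ≤ α) (hα1 : α < 1) (n : ℕ) : s α n ≤ 1 := by
  induction n with
  | zero => rw [s_zero]
  | succ n ih =>
    rw [s_succ]
    have h1 : (0:ℝ) < (n:ℝ) + 1 := by positivity
    have h2 : ((n:ℝ) + 1 - α)/((n:ℝ)+1) ≤ 1 := by
      rw [div_le_one h1]; linarith
    have h3 : (0:ℝ) ≤ ((n:ℝ) + 1 - α)/((n:ℝ)+1) := by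
      apply div_nonneg _ h1.le; linarith
    calc s α n * (((n:ℝ) + 1 - α)/((n:ℝ)+1)) ≤ 1 * 1 := by
          apply mul_le_mul ih h2 h3 zero_le_one
      _ = 1 := by ring

lemma neg_g (α : ℝ) (j : ℕ) : -(g α (j+1)) = α * s α j / ((j:ℝ)+1) := by
  induction j with
  | zero => simp [g_succ, g, s_zero]
  | succ j ih =>
    rw [g_succ, s_succ]
    have h1 : ((j:ℝ)+1) ≠ 0 := by positivity
    have h2 : ((j:ℝ)+1+1) ≠ 0 := by positivity
    have : g α (j+1) = -(α * s α j / ((j:ℝ)+1)) := by linarith [ih]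
    rw [this]
    push_cast
    field_simp

lemma s_sub (α : ℝ) (j : ℕ) : s α j - s α (j+1) = -(g α (j+1)) := by
  rw [s_succ, neg_g]
  have h1 : ((j:ℝ)+1) ≠ 0 := by positivity
  field_simp
  ring

lemma sum_neg_g (α : ℝ) (n : ℕ) : ∑ j ∈ Finset.range n, (-(g α (j+1))) = 1 - s α n := by
  have h := Finset.sum_range_sub' (s α) n
  rw [s_zero] at h
  rw [← h]
  exact Finset.sum_congr rfl fun j _ => (s_sub α j).symm

lemma g_nonpos {α : ℝ} (hα0 : 0 ≤ α) (hα1 : α < 1) (j : ℕ) : g α (j+1) ≤ 0 := by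
  have h := neg_g α j
  have h2 : 0 ≤ α * s α j / ((j:ℝ)+1) :=
    div_nonneg (mul_nonneg hα0 (s_pos hα1 j).le) (by positivity)
  linarith

/-- Harmonic sum bound. -/
lemma harmonic_le (n : ℕ) (hn : 1 ≤ n) :
    ∑ i ∈ Finset.range n, (1:ℝ)/((i:ℝ)+1) ≤ 1 + Real.log n := by
  induction n with
  | zero => omega
  | succ n ih =>
    rcases Nat.eq_or_lt_of_le hn with h1 | h1
    · simp [← h1]
    · have hn' : 1 ≤ n := by omega
      have hlog : 1/((n:ℝ)+1) ≤ Real.log ((n:ℝ)+1) - Real.log n := by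
        have hn0 : (0:ℝ) < n := by exact_mod_cast hn'
        have := Real.log_le_sub_one_of_pos (x := (n:ℝ)/((n:ℝ)+1)) (by positivity)
        rw [Real.log_div (by positivity) (by positivity)] at this
        have : Real.log n - Real.log ((n:ℝ)+1) ≤ (n:ℝ)/((n:ℝ)+1) - 1 := this
        have heq : (n:ℝ)/((n:ℝ)+1) - 1 = -(1/((n:ℝ)+1)) := by field_simp; ring
        linarith [heq ▸ this]
      rw [Finset.sum_range_succ]
      push_cast
      linarith [ih hn']

/-- The crucial lower bound `s α n ≥ D / n^α`. -/
lemma s_ge {α : ℝ} (hα0 : 0 < α) (hα1 : α < 1) (n : ℕ) (hn : 1 ≤ n) :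
    Real.exp (-(α/(1-α)) - α) * ((n:ℝ)^α)⁻¹ ≤ s α n := by
  have hn0 : (0:ℝ) < n := by exact_mod_cast hn
  -- log of s
  have hfac : ∀ i : ℕ, (0:ℝ) < (-α + i + 1) := fun i => by
    have : (0:ℝ) ≤ i := Nat.cast_nonneg i
    linarith
  have hlogs : Real.log (s α n) = ∑ i ∈ Finset.range n, Real.log ((-α + i + 1)/((i:ℝ)+1)) := by
    rw [s, B, Real.log_prod]
    intro i _
    exact ne_of_gt (div_pos (hfac i) (by positivity))
  -- each factor bound : log((i+1-α)/(i+1)) ≥ -α/(i+1-α)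
  have hterm : ∀ i : ℕ, -(α/((i:ℝ)+1-α)) ≤ Real.log ((-α + i + 1)/((i:ℝ)+1)) := by
    intro i
    have h1 : (0:ℝ) < (i:ℝ)+1-α := by have := hfac i; linarith
    have h2 := Real.log_le_sub_one_of_pos (x := ((i:ℝ)+1)/((i:ℝ)+1-α)) (by positivity)
    rw [Real.log_div (by positivity) (ne_of_gt h1)] at h2
    have heq : ((i:ℝ)+1)/((i:ℝ)+1-α) - 1 = α/((i:ℝ)+1-α) := by field_simp; ring
    rw [heq] at h2
    have heq2 : Real.log ((-α + i + 1)/((i:ℝ)+1))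
        = Real.log ((i:ℝ)+1-α) - Real.log ((i:ℝ)+1) := by
      rw [show (-α + (i:ℝ) + 1) = (i:ℝ)+1-α by ring,
        Real.log_div (ne_of_gt h1) (by positivity)]
    rw [heq2]; linarith
  -- sum of α/(i+1-α) ≤ α/(1-α) + α(1 + log n)
  have hsum : ∑ i ∈ Finset.range n, α/((i:ℝ)+1-α) ≤ α/(1-α) + α*(1 + Real.log n) := by
    obtain ⟨m, rfl⟩ : ∃ m, n = m + 1 := ⟨n-1, by omega⟩
    rw [Finset.sum_range_succ']
    simp only [Nat.cast_zero]
    have hs1 : ∑ i ∈ Finset.range m, α/(((i:ℕ)+1:ℝ)+1-α) ≤ α * ∑ i ∈ Finset.range m, 1/((i:ℝ)+1) := by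
      rw [Finset.mul_sum]
      refine Finset.sum_le_sum fun i _ => ?_
      have h3 : (0:ℝ) < (i:ℝ)+1 := by positivity
      have h4 : (0:ℝ) < ((i:ℕ)+1:ℝ)+1-α := by push_cast; linarith
      rw [mul_one_div]
      refine div_le_div_of_nonneg_left hα0.le h3 ?_
      push_cast
      linarith
    have hs2 : ∑ i ∈ Finset.range m, (1:ℝ)/((i:ℝ)+1) ≤ 1 + Real.log (m+1) := by
      rcases Nat.eq_zero_or_pos m with rfl | hm
      · simp
      · calc ∑ i ∈ Finset.range m, (1:ℝ)/((i:ℝ)+1) ≤ 1 + Real.log m := harmonic_le m hm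
          _ ≤ 1 + Real.log (m+1) := by
            have : (0:ℝ) < m := by exact_mod_cast hm
            have := Real.log_le_log (by positivity : (0:ℝ) < m) (by push_cast; linarith : (m:ℝ) ≤ (m:ℝ)+1)
            linarith
    have : (0:ℝ) + 1 - α = 1 - α := by ring
    rw [this]
    push_cast at hs1 hs2 ⊢
    nlinarith [hs1, hs2, hα0]
  -- combine
  have hlb : -(α/(1-α)) - α - α * Real.log n ≤ Real.log (s α n) := by
    rw [hlogs]
    calc -(α/(1-α)) - α - α * Real.log n
        = -(α/(1-α) + α*(1 + Real.log n)) := by ring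
      _ ≤ -(∑ i ∈ Finset.range n, α/((i:ℝ)+1-α)) := by linarith [hsum]
      _ = ∑ i ∈ Finset.range n, -(α/((i:ℝ)+1-α)) := by rw [Finset.sum_neg_distrib]
      _ ≤ _ := Finset.sum_le_sum fun i _ => hterm i
  have hspos := s_pos hα1 n
  have := Real.exp_le_exp.mpr hlb
  rw [Real.exp_log hspos] at this
  refine le_trans (le_of_eq ?_) this
  rw [show -(α/(1-α)) - α - α * Real.log n = (-(α/(1-α)) - α) + (-(α * Real.log n)) by ring,
    Real.exp_add]
  congr 1
  rw [← Real.log_rpow hn0, Real.exp_neg, Real.exp_log (by positivity)]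


lemma summable_aux {r : ℝ} (hr0 : 0 < r) (hr : r < 1) (n : ℕ) :
    Summable (fun k : ℕ => ((k:ℝ)+1)^n * r^k) := by
  have h : Summable (fun k : ℕ => (k:ℝ)^n * r^k) :=
    summable_pow_mul_geometric_of_norm_lt_one n
      (by rwa [Real.norm_eq_abs, abs_of_nonneg hr0.le])
  have h2 : Summable (fun k : ℕ => ((k:ℝ)+1)^n * r^(k+1)) := by
    have := (summable_nat_add_iff (f := fun k : ℕ => (k:ℝ)^n * r^k) 1).mpr h
    simpa [Nat.cast_add] using this
  have h3 := h2.div_const r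
  refine h3.congr fun k => ?_
  field_simp [pow_succ]
  ring

lemma term_bound {α l : ℝ} (hα0 : 0 < α) (hα1 : α ≤ 1) (hl : 0 ≤ l) (m k : ℕ) :
    ‖(-l)^k * B (α*k) m‖ ≤ ((k:ℝ)+1)^m * l^k := by
  have hk : (0:ℝ) ≤ α*k := by positivity
  have hB0 : 0 < B (α*k) m := B_pos (by linarith) m
  rw [norm_mul, norm_pow, norm_neg, Real.norm_eq_abs, Real.norm_eq_abs,
    abs_of_nonneg hl, abs_of_nonneg hB0.le, mul_comm]
  apply mul_le_mul_of_nonneg_right _ (by positivity)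
  calc B (α*k) m ≤ (1 + α*k)^m := B_le (by positivity) m
    _ ≤ ((k:ℝ)+1)^m := by
        apply pow_le_pow_left₀ (by positivity)
        nlinarith [Nat.cast_nonneg (α := ℝ) k]

lemma summable_u {α l : ℝ} (hα0 : 0 < α) (hα1 : α ≤ 1) (hl0 : 0 < l) (hl1 : l < 1) (m : ℕ) :
    Summable (fun k : ℕ => (-l)^k * B (α*k) m) :=
  (summable_aux hl0 hl1 m).of_norm_bounded (fun k => term_bound hα0 hα1 hl0.le m k)

noncomputable def u (α l : ℝ) (m : ℕ) : ℝ := ∑' k : ℕ, (-l)^k * B (α*k) m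

lemma u_rec {α l : ℝ} (hα0 : 0 < α) (hα1 : α < 1) (hl0 : 0 < l) (hl1 : l < 1) (n : ℕ) :
    (1+l) * u α l n = s α n + ∑ j ∈ Finset.range n, (-(g α (j+1))) * u α l (n-(j+1)) := by
  -- the shifted sum
  have hsum1 : Summable (fun k : ℕ => (-l)^k * B (α*k - α) n) := by
    refine (summable_aux hl0 hl1 n).of_norm_bounded (fun k => ?_)
    have hgt : (-1 : ℝ) < α*k - α := by
      have : (0:ℝ) ≤ α * k := by positivity
      linarith
    have hB0 : 0 < B (α*k - α) n := B_pos hgt n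
    rw [norm_mul, norm_pow, norm_neg, Real.norm_eq_abs, Real.norm_eq_abs,
      abs_of_nonneg hl0.le, abs_of_nonneg hB0.le, mul_comm]
    apply mul_le_mul_of_nonneg_right _ (by positivity)
    calc B (α*k - α) n ≤ B (α*k) n := B_mono hgt (by linarith) n
      _ ≤ (1 + α*k)^n := B_le (by positivity) n
      _ ≤ ((k:ℝ)+1)^n := by
          apply pow_le_pow_left₀ (by positivity)
          nlinarith [Nat.cast_nonneg (α := ℝ) k]
  -- LHS : tsum over k of (-l)^k * B(αk - α) n equals s - l * u
  have hshift : ∑' k : ℕ, (-l)^k * B (α*k - α) n = s α n - l * u α l n := by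
    rw [Summable.tsum_eq_zero_add hsum1]
    have h0 : (-l)^(0:ℕ) * B (α*(0:ℕ) - α) n = s α n := by
      norm_num [s]
    rw [h0]
    have h1 : ∀ k : ℕ, (-l)^(k+1) * B (α*(k+1:ℕ) - α) n = (-l) * ((-l)^k * B (α*k) n) := by
      intro k
      have : α*((k:ℕ)+1:ℝ) - α = α*k := by push_cast; ring
      push_cast
      rw [show α*((k:ℝ)+1) - α = α*k by ring, pow_succ]
      ring
    have h2 : ∑' k : ℕ, (-l)^(k+1) * B (α*(k+1:ℕ) - α) n = -l * u α l n := by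
      rw [tsum_congr h1, tsum_mul_left]
      rfl
    push_cast at h2 ⊢
    rw [h2]
    ring
  -- also equals the convolution with u
  have hconv : ∑' k : ℕ, (-l)^k * B (α*k - α) n
      = ∑ j ∈ Finset.range (n+1), g α j * u α l (n-j) := by
    have hterm : ∀ k : ℕ, (-l)^k * B (α*k - α) n
        = ∑ j ∈ Finset.range (n+1), g α j * ((-l)^k * B (α*k) (n-j)) := by
      intro k
      rw [← key α (α*k) n, Finset.mul_sum]
      exact Finset.sum_congr rfl fun j _ => by ring
    rw [tsum_congr hterm, Summable.tsum_finsetSum (fun j _ => ((summable_u hα0 hα1.le hl0 hl1 (n-j)).mul_left _))]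
    refine Finset.sum_congr rfl fun j _ => ?_
    unfold u
    rw [tsum_mul_left]
  rw [hconv] at hshift
  rw [Finset.sum_range_succ'] at hshift
  simp only [Nat.sub_zero] at hshift
  rw [show g α 0 = 1 from rfl, one_mul] at hshift
  have : ∑ j ∈ Finset.range n, (-(g α (j+1))) * u α l (n-(j+1))
      = -∑ j ∈ Finset.range n, g α (j+1) * u α l (n-(j+1)) := by
    rw [← Finset.sum_neg_distrib]
    exact Finset.sum_congr rfl fun j _ => by ring
  rw [this]
  linarith [hshift]

lemma u_ge {α l c : ℝ} (hα0 : 0 < α) (hα1 : α < 1) (hl0 : 0 < l) (hl1 : l < 1)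
    (hc0 : 0 < c) (hc1 : c * (1+l) ≤ 1) (n : ℕ)
    (hstep : ∀ m : ℕ, 1 ≤ m → m ≤ n → c * l ≤ s α m * (1 - c)) :
    ∀ m, m ≤ n → c ≤ u α l m := by
  intro m
  induction m using Nat.strong_induction_on with
  | _ m ih =>
    intro hmn
    rcases Nat.eq_zero_or_pos m with rfl | hm
    · -- base case : u 0 = (1+l)⁻¹
      have hB : ∀ k : ℕ, (-l)^k * B (α*k) 0 = (-l)^k := fun k => by rw [B_zero, mul_one]
      have : u α l 0 = (1 - (-l))⁻¹ := by
        rw [u, tsum_congr hB, tsum_geometric_of_norm_lt_one]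
        rw [norm_neg, Real.norm_eq_abs, abs_of_nonneg hl0.le]
        exact hl1
      rw [this, show (1 : ℝ) - -l = 1 + l by ring, inv_eq_one_div,
        le_div_iff₀ (by linarith : (0:ℝ) < 1 + l)]
      exact hc1
    · -- inductive step
      have hrec := u_rec hα0 hα1 hl0 hl1 m
      have hsum : c * (1 - s α m) ≤ ∑ j ∈ Finset.range m, (-(g α (j+1))) * u α l (m-(j+1)) := by
        calc c * (1 - s α m) = ∑ j ∈ Finset.range m, (-(g α (j+1))) * c := by
              rw [← Finset.sum_mul, sum_neg_g]; ring
          _ ≤ _ := by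
              refine Finset.sum_le_sum fun j hj => ?_
              have hg : 0 ≤ -(g α (j+1)) := by linarith [g_nonpos hα0.le hα1 j]
              have hu : c ≤ u α l (m-(j+1)) := by
                refine ih _ ?_ (le_trans (Nat.sub_le m _) hmn)
                omega
              exact mul_le_mul_of_nonneg_left hu hg
      have hs := hstep m hm hmn
      have h1l : (0:ℝ) < 1 + l := by linarith
      have hge : c * (1+l) ≤ (1+l) * u α l m := by
        rw [hrec]
        linarith
      nlinarith [hge, h1l]


lemma B_one (n : ℕ) : B 0 n = 1 := by
  rw [B, ← Finset.prod_const_one (s := Finset.range n)]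
  exact Finset.prod_congr rfl fun i _ => by
    rw [zero_add, div_self (by positivity)]

lemma B_div_anti {x : ℝ} (hx : 0 ≤ x) (n : ℕ) (hn : 1 ≤ n) :
    B x (n+1) / ((n:ℝ)+1)^x ≤ B x n / (n:ℝ)^x := by
  have hn0 : (0:ℝ) < n := by exact_mod_cast hn
  have hp1 : (0:ℝ) < ((n:ℝ)+1)^x := Real.rpow_pos_of_pos (by linarith) x
  have hp2 : (0:ℝ) < (n:ℝ)^x := Real.rpow_pos_of_pos hn0 x
  have hB : 0 < B x n := B_pos (by linarith) n
  have hfrac : (x + n + 1)/((n:ℝ)+1) ≤ ((n:ℝ)+1)^x / (n:ℝ)^x := by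
    have hq : (0:ℝ) < ((n:ℝ)+1)/n := by positivity
    have hlog : 1/((n:ℝ)+1) ≤ Real.log (((n:ℝ)+1)/n) := by
      have h2 := Real.log_le_sub_one_of_pos (x := (n:ℝ)/((n:ℝ)+1)) (by positivity)
      rw [Real.log_div (by positivity) (by positivity)] at h2
      have heq : (n:ℝ)/((n:ℝ)+1) - 1 = -(1/((n:ℝ)+1)) := by field_simp; ring
      rw [heq] at h2
      rw [Real.log_div (by positivity) (by positivity)]
      linarith
    calc (x + n + 1)/((n:ℝ)+1) = x/((n:ℝ)+1) + 1 := by field_simp; ring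
      _ ≤ Real.exp (x/((n:ℝ)+1)) := Real.add_one_le_exp _
      _ ≤ Real.exp (Real.log (((n:ℝ)+1)/n) * x) := by
          rw [Real.exp_le_exp]
          rw [div_eq_mul_one_div x ((n:ℝ)+1), mul_comm (Real.log _) x]
          exact mul_le_mul_of_nonneg_left hlog hx
      _ = (((n:ℝ)+1)/n)^x := (Real.rpow_def_of_pos hq x).symm
      _ = ((n:ℝ)+1)^x / (n:ℝ)^x := Real.div_rpow (by linarith : (0:ℝ) ≤ (n:ℝ)+1) hn0.le x
  rw [B_succ]
  rw [div_le_div_iff₀ hp1 hp2] at *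
  calc B x n * ((x + ↑n + 1) / (↑n + 1)) * (n:ℝ)^x
      ≤ B x n * (((n:ℝ)+1)^x / (n:ℝ)^x) * (n:ℝ)^x := by
        apply mul_le_mul_of_nonneg_right _ hp2.le
        exact mul_le_mul_of_nonneg_left hfrac hB.le
    _ = B x n * ((n:ℝ)+1)^x := by field_simp
    _ = B x n * ((n:ℝ)+1)^x := rfl

lemma B_div_anti' {x : ℝ} (hx : 0 ≤ x) (N n : ℕ) (hN : 1 ≤ N) (hn : N ≤ n) :
    B x n / (n:ℝ)^x ≤ B x N / (N:ℝ)^x := by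
  induction n, hn using Nat.le_induction with
  | base => exact le_refl _
  | succ n hn ih =>
    refine le_trans ?_ ih
    have := B_div_anti hx n (le_trans hN hn)
    push_cast
    exact this

lemma r_tendsto {x : ℝ} (hx : 0 < x) :
    Tendsto (fun n : ℕ => B x n / (n:ℝ)^x) atTop (𝓝 (Real.Gamma (x+1))⁻¹) := by
  have hG : Tendsto (fun n => x * Real.GammaSeq x n) atTop (𝓝 (x * Real.Gamma x)) :=
    (Real.GammaSeq_tendsto_Gamma x).const_mul x
  have hne : x * Real.Gamma x ≠ 0 := ne_of_gt (mul_pos hx (Real.Gamma_pos_of_pos hx))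
  have hinv := hG.inv₀ hne
  rw [show (x * Real.Gamma x)⁻¹ = (Real.Gamma (x+1))⁻¹ by
    rw [Real.Gamma_add_one (ne_of_gt hx)]] at hinv
  refine Tendsto.congr' ?_ hinv
  filter_upwards [eventually_ge_atTop 1] with n hn
  have hn0 : (0:ℝ) < n := by exact_mod_cast hn
  have hfact : (0:ℝ) < (Nat.factorial n : ℝ) := by exact_mod_cast Nat.factorial_pos n
  have hB : 0 < B x n := B_pos (by linarith) n
  have hnx : (0:ℝ) < (n:ℝ)^x := Real.rpow_pos_of_pos hn0 x
  have hBn : B x n = (∏ i ∈ Finset.range n, (x + i + 1)) / (Nat.factorial n : ℝ) := by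
    rw [B, Finset.prod_div_distrib]
    congr 1
    exact_mod_cast Finset.prod_range_add_one_eq_factorial n
  have hprod : ∏ j ∈ Finset.range (n+1), (x + (j:ℝ)) = x * (B x n * (Nat.factorial n : ℝ)) := by
    rw [Finset.prod_range_succ', hBn]
    field_simp
    rw [mul_comm]
    congr 1
    · simp
    exact Finset.prod_congr rfl fun i _ => by push_cast; ring
  rw [Real.GammaSeq, hprod]
  field_simp

lemma u_tendsto {α η : ℝ} (hα0 : 0 < α) (hα1 : α ≤ 1) (hη : 0 < η) :
    Tendsto (fun n : ℕ => u α (η/(n:ℝ)^α) n) atTop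
      (𝓝 (∑' k : ℕ, (-η)^k / Real.Gamma (α*k+1))) := by
  have hNex : ∀ᶠ n : ℕ in atTop, η < (n:ℝ)^α := by
    have h1 : Tendsto (fun n : ℕ => ((n:ℝ))^α) atTop atTop :=
      (tendsto_rpow_atTop hα0).comp tendsto_natCast_atTop_atTop
    exact h1.eventually_gt_atTop η
  obtain ⟨N, hN⟩ := (hNex.and (eventually_ge_atTop 1)).exists
  obtain ⟨hNη, hN1⟩ := hN
  have hN0 : (0:ℝ) < N := by exact_mod_cast hN1
  have hNα : (0:ℝ) < (N:ℝ)^α := Real.rpow_pos_of_pos hN0 α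
  have hr0 : 0 < η / (N:ℝ)^α := by positivity
  have hr1 : η / (N:ℝ)^α < 1 := by rw [div_lt_one hNα]; exact hNη
  have hpowr : ∀ (m : ℕ) (k : ℕ), ((m:ℝ)^α)^k = (m:ℝ)^(α*(k:ℝ)) := by
    intro m k
    rw [← Real.rpow_natCast ((m:ℝ)^α) k, ← Real.rpow_mul (Nat.cast_nonneg m)]
  have hsumb : Summable (fun k : ℕ => η^k * (B (α*k) N / ((N:ℝ)^α)^k)) := by
    refine (summable_aux hr0 hr1 N).of_norm_bounded (fun k => ?_)
    have hk0 : (0:ℝ) ≤ α*k := by positivity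
    have hB0 : 0 < B (α*k) N := B_pos (by linarith) N
    have hb : η^k * (B (α*k) N / ((N:ℝ)^α)^k) = B (α*k) N * (η/(N:ℝ)^α)^k := by
      rw [div_pow]
      field_simp
    rw [Real.norm_eq_abs, abs_of_nonneg (by positivity), hb]
    apply mul_le_mul_of_nonneg_right _ (by positivity)
    calc B (α*(k:ℝ)) N ≤ (1 + α*k)^N := B_le (by positivity) N
      _ ≤ ((k:ℝ)+1)^N := by
          apply pow_le_pow_left₀ (by positivity)
          nlinarith [Nat.cast_nonneg (α := ℝ) k]
  have hab : ∀ k : ℕ, Tendsto (fun n : ℕ => (-(η/(n:ℝ)^α))^k * B (α*k) n) atTop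
      (𝓝 ((-η)^k * (Real.Gamma (α*k+1))⁻¹)) := by
    intro k
    rcases Nat.eq_zero_or_pos k with rfl | hk
    · simp only [pow_zero, one_mul, Nat.cast_zero, mul_zero, zero_add, Real.Gamma_one,
        inv_one, B_one]
      exact tendsto_const_nhds
    · have hx : 0 < α*(k:ℝ) := by
        have : (0:ℝ) < k := by exact_mod_cast hk
        positivity
      have h := (r_tendsto hx).const_mul ((-η)^k)
      refine Tendsto.congr (fun n => ?_) h
      rw [← neg_div, div_pow, hpowr n k]
      ring
  have hbound : ∀ᶠ n : ℕ in atTop, ∀ k : ℕ,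
      ‖(-(η/(n:ℝ)^α))^k * B (α*k) n‖ ≤ η^k * (B (α*k) N / ((N:ℝ)^α)^k) := by
    filter_upwards [eventually_ge_atTop N] with n hn k
    have hn1 : 1 ≤ n := le_trans hN1 hn
    have hn0 : (0:ℝ) < n := by exact_mod_cast hn1
    have hk0' : (0:ℝ) ≤ α*k := by positivity
    have hB0 : 0 < B (α*k) n := B_pos (by linarith) n
    have hnα : (0:ℝ) < (n:ℝ)^α := Real.rpow_pos_of_pos hn0 α
    rw [norm_mul, norm_pow, norm_neg, Real.norm_eq_abs, Real.norm_eq_abs,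
      abs_of_nonneg (by positivity : (0:ℝ) ≤ η/(n:ℝ)^α), abs_of_nonneg hB0.le]
    have hmain : B (α*k) n / (n:ℝ)^(α*(k:ℝ)) ≤ B (α*k) N / (N:ℝ)^(α*(k:ℝ)) :=
      B_div_anti' (by positivity) N n hN1 hn
    have hpn : (0:ℝ) < (n:ℝ)^(α*(k:ℝ)) := Real.rpow_pos_of_pos hn0 _
    have hpN : (0:ℝ) < (N:ℝ)^(α*(k:ℝ)) := Real.rpow_pos_of_pos hN0 _
    rw [div_pow, hpowr n k, hpowr N k]
    rw [div_mul_eq_mul_div, div_le_iff₀ hpn]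
    calc η^k * B (α*(k:ℝ)) n
        = η^k * (B (α*(k:ℝ)) n / (n:ℝ)^(α*(k:ℝ))) * (n:ℝ)^(α*(k:ℝ)) := by field_simp
      _ ≤ η^k * (B (α*(k:ℝ)) N / (N:ℝ)^(α*(k:ℝ))) * (n:ℝ)^(α*(k:ℝ)) := by
          apply mul_le_mul_of_nonneg_right _ hpn.le
          exact mul_le_mul_of_nonneg_left hmain (by positivity)
  have key := tendsto_tsum_of_dominated_convergence (𝓕 := (atTop : Filter ℕ)) hsumb hab hbound
  have hg : (∑' k : ℕ, (-η)^k * (Real.Gamma (α*k+1))⁻¹)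
      = ∑' k : ℕ, (-η)^k / Real.Gamma (α*k+1) :=
    tsum_congr fun k => by rw [div_eq_mul_inv]
  rw [← hg]
  exact key


end MLaux

open MLaux

/-- For every `0 < α ≤ 1` and every `η > 0`, one has `E_{α,1}(-η) > 0`. -/
theorem mittagLeffler_pos (α : ℝ) (hα0 : 0 < α) (hα1 : α ≤ 1) (η : ℝ) (hη : 0 < η) :
    0 < mittagLeffler α 1 (-η) := by
  rcases eq_or_lt_of_le hα1 with rfl | hα1'
  · -- α = 1 : the function is exp (-η)
    have h : mittagLeffler 1 1 (-η) = ∑' k : ℕ, (-η)^k / (Nat.factorial k : ℝ) := by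
      refine tsum_congr fun k => ?_
      rw [one_mul]
      congr 1
      exact_mod_cast Real.Gamma_nat_eq_factorial k
    have h2 := congrFun (NormedSpace.exp_eq_tsum_div (𝔸 := ℝ)) (-η)
    rw [h, ← h2, ← congrFun Real.exp_eq_exp_ℝ (-η)]
    exact Real.exp_pos _
  · -- α < 1
    set D : ℝ := Real.exp (-(α/(1-α)) - α) with hD
    have hD0 : 0 < D := Real.exp_pos _
    have hD1 : D ≤ 1 := by
      rw [hD, Real.exp_le_one_iff]
      have h1 : 0 < 1 - α := by linarith
      have : 0 ≤ α/(1-α) := by positivity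
      linarith
    set c : ℝ := D / (D + η) with hc
    have hc0 : 0 < c := by positivity
    have hev : ∀ᶠ n : ℕ in atTop, c ≤ u α (η/(n:ℝ)^α) n := by
      have hNex : ∀ᶠ n : ℕ in atTop, η < (n:ℝ)^α := by
        have h1 : Tendsto (fun n : ℕ => ((n:ℝ))^α) atTop atTop :=
          (tendsto_rpow_atTop hα0).comp tendsto_natCast_atTop_atTop
        exact h1.eventually_gt_atTop η
      filter_upwards [hNex, eventually_ge_atTop 1] with n hnη hn1
      have hn0 : (0:ℝ) < n := by exact_mod_cast hn1
      have hnα : (0:ℝ) < (n:ℝ)^α := Real.rpow_pos_of_pos hn0 α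
      have hnα1 : (1:ℝ) ≤ (n:ℝ)^α := by
        calc (1:ℝ) = (1:ℝ)^α := (Real.one_rpow α).symm
          _ ≤ (n:ℝ)^α := Real.rpow_le_rpow zero_le_one (by exact_mod_cast hn1) hα0.le
      set l : ℝ := η/(n:ℝ)^α with hl
      have hl0 : 0 < l := by positivity
      have hl1 : l < 1 := by rw [hl, div_lt_one hnα]; exact hnη
      have hc1 : c * (1 + l) ≤ 1 := by
        rw [hc, hl]
        rw [div_mul_eq_mul_div, div_le_one (by positivity)]
        have hexp : (1:ℝ) + η/(n:ℝ)^α = ((n:ℝ)^α + η)/(n:ℝ)^α := by field_simp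
        rw [hexp, ← mul_div_assoc, div_le_iff₀ hnα]
        nlinarith [hD1, hnα1, hη, hD0]
      have hstep : ∀ m : ℕ, 1 ≤ m → m ≤ n → c * l ≤ s α m * (1 - c) := by
        intro m hm1 hmn
        have hm0 : (0:ℝ) < m := by exact_mod_cast hm1
        have hmα : (0:ℝ) < (m:ℝ)^α := Real.rpow_pos_of_pos hm0 α
        have hs1 : D * ((m:ℝ)^α)⁻¹ ≤ s α m := s_ge hα0 hα1' m hm1
        have hmono : (m:ℝ)^α ≤ (n:ℝ)^α :=
          Real.rpow_le_rpow hm0.le (by exact_mod_cast hmn) hα0.le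
        have hs2 : D * ((n:ℝ)^α)⁻¹ ≤ s α m := by
          refine le_trans ?_ hs1
          apply mul_le_mul_of_nonneg_left _ hD0.le
          exact inv_anti₀ hmα hmono
        have h1c : 1 - c = η/(D+η) := by rw [hc]; field_simp; ring
        have hDη : (0:ℝ) < D + η := by positivity
        calc c * l = (D * ((n:ℝ)^α)⁻¹) * (η/(D+η)) := by
              rw [hc, hl]; field_simp
          _ ≤ s α m * (η/(D+η)) := by
              apply mul_le_mul_of_nonneg_right hs2 (by positivity)
          _ = s α m * (1 - c) := by rw [h1c]
      exact u_ge hα0 hα1' hl0 hl1 hc0 hc1 n hstep n (le_refl n)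
    have hlim := u_tendsto hα0 hα1 hη
    have hge : c ≤ ∑' k : ℕ, (-η)^k / Real.Gamma (α*k+1) := ge_of_tendsto hlim hev
    have : mittagLeffler α 1 (-η) = ∑' k : ℕ, (-η)^k / Real.Gamma (α*k+1) := rfl
    rw [this]
    linarith
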